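/- arXiv:2111.13045 — 2 statements merged into one kernel-verified Lean document; each statement's English description precedes it below -/
import Mathlib

section
/- Local null-controllability: let λ ∈ ℝ, A = λ·id + E on ℓ², and let ρ > 0. Then there exists δ > 0 (one may take δ = ρ√κ, where κ > 0 is the uniform lower bound of the Gramian W) such that for every y₀ ∈ ℓ² with ‖y₀‖₂ ≤ δ there exist T > 0 and a control f ∈ L²([0,T], ℓ²) with ∫₀ᵀ ‖f(t)‖₂² dt ≤ ρ² for which the mild solution y(t) = e^{tA}y₀ + e^{tA}∫₀ᵗ e^{-sA} f(s) ds of ẏ = Ay + f, y(0) = y₀, satisfies y(T) = 0. -/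
set_option maxHeartbeats 1000000
set_option synthInstance.maxHeartbeats 400000


open scoped ENNReal
open MeasureTheory Filter

noncomputable section

/-- The real Hilbert space `ℓ²` of square-summable real sequences. -/
abbrev ell2 : Type := lp (fun _ : ℕ => ℝ) 2

lemma shift_memℓp (y : ell2) : Memℓp (fun n => y (n + 1)) 2 := by
  have h : Summable fun n : ℕ => ‖y n‖ ^ (2 : ℝ≥0∞).toReal :=
    (memℓp_gen_iff (by norm_num)).mp (lp.memℓp y)
  exact memℓp_gen (h.comp_injective (add_left_injective 1))

/-- The left shift operator `E : ℓ² → ℓ²`, `(Ey)ₙ = yₙ₊₁`. -/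
def shiftE : ell2 →L[ℝ] ell2 :=
  LinearMap.mkContinuous
    { toFun := fun y => ⟨fun n => y (n + 1), shift_memℓp y⟩
      map_add' := fun y z => by
        ext n
        simp [lp.coeFn_add] <;> rfl
      map_smul' := fun c y => by
        ext n
        simp [lp.coeFn_smul] }
    1
    (fun y => by
      rw [one_mul]
      have h2 : (0:ℝ) < (2 : ℝ≥0∞).toReal := by norm_num
      have hy := lp.norm_rpow_eq_tsum h2 y
      have hEy := lp.norm_rpow_eq_tsum h2 (⟨fun n => y (n + 1), shift_memℓp y⟩ : ell2)
      have hle : (∑' n : ℕ, ‖y (n + 1)‖ ^ (2 : ℝ≥0∞).toReal)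
          ≤ ∑' n : ℕ, ‖y n‖ ^ (2 : ℝ≥0∞).toReal := by
        have hs : Summable fun n : ℕ => ‖y n‖ ^ (2 : ℝ≥0∞).toReal :=
          (memℓp_gen_iff h2).mp (lp.memℓp y)
        exact tsum_comp_le_tsum_of_inj hs (fun n => by positivity)
          (add_left_injective 1)
      have key : ‖(⟨fun n => y (n + 1), shift_memℓp y⟩ : ell2)‖ ^ (2 : ℝ≥0∞).toReal
          ≤ ‖y‖ ^ (2 : ℝ≥0∞).toReal := by
        rw [hy, hEy]; exact hle
      exact (Real.rpow_le_rpow_iff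
        (norm_nonneg ((⟨fun n => y (n + 1), shift_memℓp y⟩ : ell2))) (norm_nonneg y) h2).mp key)

/-- The operator `A = λ·id + E` on `ℓ²`. -/
def opA (lam : ℝ) : ell2 →L[ℝ] ell2 :=
  lam • ContinuousLinearMap.id ℝ ell2 + shiftE

/-- Local null-controllability: for every `λ ∈ ℝ` and `ρ > 0` there is `δ > 0` such that
from every `y₀` with `‖y₀‖₂ ≤ δ` the system `ẏ = Ay + f` can be steered to `0` in some
time `T > 0` by an admissible control `f ∈ L²([0,T], ℓ²)` with `∫₀^T ‖f‖₂² dt ≤ ρ²`. -/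
theorem stmt16 (lam ρ : ℝ) (hρ : 0 < ρ) :
    ∃ δ : ℝ, 0 < δ ∧ ∀ y0 : ell2, ‖y0‖ ≤ δ →
      ∃ (T : ℝ) (f : ℝ → ell2), 0 < T ∧
        MemLp f 2 (volume.restrict (Set.Icc (0:ℝ) T)) ∧
        (∫ t in (0:ℝ)..T, ‖f t‖ ^ 2) ≤ ρ ^ 2 ∧
        NormedSpace.exp (T • opA lam) y0 +
          NormedSpace.exp (T • opA lam)
            (∫ s in (0:ℝ)..T, NormedSpace.exp ((-s) • opA lam) (f s)) = 0 := by
  letI : NormedAlgebra ℚ (ell2 →L[ℝ] ell2) := NormedAlgebra.restrictScalars ℚ ℝ _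
  set A := opA lam with hA
  have hcont : Continuous fun s : ℝ => NormedSpace.exp (s • A) :=
    NormedSpace.exp_continuous.comp (continuous_id.smul continuous_const)
  obtain ⟨C, hC⟩ := (isCompact_Icc (a := (0:ℝ)) (b := 1)).exists_bound_of_continuousOn
    hcont.continuousOn
  set C' : ℝ := max C 0 + 1 with hC'
  have hC'pos : 0 < C' := by positivity
  refine ⟨ρ / C', div_pos hρ hC'pos, fun y0 hy0 => ?_⟩
  set g : ℝ → ell2 := fun s => NormedSpace.exp (s • A) (-y0) with hg
  have hcontg : Continuous g := hcont.clm_apply continuous_const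
  -- pointwise bound on `[0,1]`
  have hbound : ∀ s ∈ Set.Icc (0:ℝ) 1, ‖g s‖ ≤ ρ := by
    intro s hs
    have h1 : ‖g s‖ ≤ ‖NormedSpace.exp (s • A)‖ * ‖(-y0 : ell2)‖ :=
      (NormedSpace.exp (s • A)).le_opNorm (-y0)
    rw [norm_neg] at h1
    have h2 : ‖NormedSpace.exp (s • A)‖ ≤ C' := by
      have := hC s hs
      calc ‖NormedSpace.exp (s • A)‖ ≤ C := this
        _ ≤ max C 0 := le_max_left _ _
        _ ≤ C' := by rw [hC']; linarith
    calc ‖g s‖ ≤ ‖NormedSpace.exp (s • A)‖ * ‖y0‖ := h1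
      _ ≤ C' * (ρ / C') := by
          exact mul_le_mul h2 hy0 (norm_nonneg _) hC'pos.le
      _ = ρ := by field_simp
  refine ⟨1, g, one_pos, ?_, ?_, ?_⟩
  · -- Memℒp
    refine MemLp.of_bound hcontg.aestronglyMeasurable ρ ?_
    filter_upwards [ae_restrict_mem measurableSet_Icc] with s hs
    exact hbound s hs
  · -- integral bound
    have hint1 : IntervalIntegrable (fun t => ‖g t‖ ^ 2) volume 0 1 :=
      ((hcontg.norm.pow 2)).intervalIntegrable 0 1
    have hint2 : IntervalIntegrable (fun _ : ℝ => ρ ^ 2) volume 0 1 :=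
      intervalIntegrable_const
    have := intervalIntegral.integral_mono_on (μ := volume) zero_le_one hint1 hint2
      (fun s hs => by
        have h := hbound s hs
        have : ‖g s‖ ^ 2 ≤ ρ ^ 2 :=
          pow_le_pow_left₀ (norm_nonneg _) h 2
        exact this)
    simpa using this
  · -- null reachability
    have hconst : ∀ s : ℝ, NormedSpace.exp ((-s) • A) (g s) = -y0 := by
      intro s
      have hcomm : Commute ((-s) • A) (s • A) :=
        ((Commute.refl A).smul_left (-s)).smul_right s
      have h1 : NormedSpace.exp ((-s) • A) * NormedSpace.exp (s • A) = 1 := by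
        rw [← NormedSpace.exp_add_of_commute hcomm, neg_smul, neg_add_cancel,
          NormedSpace.exp_zero]
      have h2 : NormedSpace.exp ((-s) • A) (g s)
          = (NormedSpace.exp ((-s) • A) * NormedSpace.exp (s • A)) (-y0) :=
        (ContinuousLinearMap.mul_apply _ _ _).symm
      rw [h2, h1, ContinuousLinearMap.one_apply]
    have hInt : (∫ s in (0:ℝ)..1, NormedSpace.exp ((-s) • A) (g s)) = -y0 := by
      have : (∫ s in (0:ℝ)..1, NormedSpace.exp ((-s) • A) (g s))
          = ∫ _ in (0:ℝ)..1, (-y0 : ell2) := by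
        apply intervalIntegral.integral_congr
        intro s _
        exact hconst s
      rw [this, intervalIntegral.integral_const]
      simp
    rw [hInt, map_neg]
    simp

end
end

section
/- Global null-controllability: let λ ≤ -1, A = λ·id + E on ℓ², and ρ > 0. Then for every y₀ ∈ ℓ² there exist T > 0 and a control f ∈ L²([0,T], ℓ²) with ∫₀ᵀ ‖f(t)‖₂² dt ≤ ρ² such that the mild solution y(t) = e^{tA}y₀ + e^{tA}∫₀ᵗ e^{-sA} f(s) ds of ẏ = Ay + f, y(0) = y₀, satisfies y(T) = 0. -/
open scoped ENNReal
open MeasureTheory Filter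

set_option maxHeartbeats 1000000
set_option synthInstance.maxHeartbeats 1000000

noncomputable section

instance : NormedAlgebra ℚ (ell2 →L[ℝ] ell2) := NormedAlgebra.restrictScalars ℚ ℝ _

lemma my_norm_exp_le {𝔸 : Type*} [NormedRing 𝔸] [NormedAlgebra ℝ 𝔸] [CompleteSpace 𝔸]
    [NormOneClass 𝔸] (x : 𝔸) :
    ‖NormedSpace.exp x‖ ≤ Real.exp ‖x‖ := by
  rw [NormedSpace.exp_eq_tsum ℝ]
  have hs : Summable fun n : ℕ => ‖((n.factorial : ℝ)⁻¹) • x ^ n‖ :=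
    NormedSpace.norm_expSeries_summable' x
  have hs2 : Summable fun n : ℕ => ‖x‖ ^ n / (n.factorial : ℝ) :=
    Real.summable_pow_div_factorial ‖x‖
  have hexp : Real.exp ‖x‖ = ∑' n : ℕ, ‖x‖ ^ n / (n.factorial : ℝ) := by
    rw [Real.exp_eq_exp_ℝ, NormedSpace.exp_eq_tsum_div]
  calc ‖∑' n : ℕ, ((n.factorial : ℝ)⁻¹) • x ^ n‖
      ≤ ∑' n : ℕ, ‖((n.factorial : ℝ)⁻¹) • x ^ n‖ := norm_tsum_le_tsum_norm hs
    _ ≤ ∑' n : ℕ, ‖x‖ ^ n / (n.factorial : ℝ) := by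
        refine Summable.tsum_le_tsum (fun n => ?_) hs hs2
        rw [norm_smul, norm_inv, RCLike.norm_natCast, div_eq_inv_mul]
        gcongr
        exact norm_pow_le x n
    _ = Real.exp ‖x‖ := hexp.symm

instance : Nontrivial ell2 := by
  refine ⟨0, lp.single 2 0 (1:ℝ), fun h => ?_⟩
  have h0 := congrArg (fun y : ell2 => y 0) h
  simp only [lp.coeFn_zero, Pi.zero_apply] at h0
  rw [lp.single_apply_self] at h0
  exact one_ne_zero h0.symm

lemma norm_shiftE_le : ‖shiftE‖ ≤ 1 := by
  refine LinearMap.mkContinuous_norm_le _ zero_le_one _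

lemma exp_opA_eq (lam t : ℝ) :
    NormedSpace.exp (t • opA lam) =
      Real.exp (t * lam) • NormedSpace.exp (t • shiftE) := by
  have h1 : t • opA lam = (t * lam) • (1 : ell2 →L[ℝ] ell2) + t • shiftE := by
    simp only [opA, smul_add, smul_smul]
    rfl
  have hcomm : Commute ((t * lam) • (1 : ell2 →L[ℝ] ell2)) (t • shiftE) :=
    ((Commute.one_left (t • shiftE)).smul_left _)
  rw [h1, NormedSpace.exp_add_of_commute hcomm]
  have h2 : NormedSpace.exp ((t * lam) • (1 : ell2 →L[ℝ] ell2))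
      = Real.exp (t * lam) • (1 : ell2 →L[ℝ] ell2) := by
    rw [← Algebra.algebraMap_eq_smul_one, ← NormedSpace.algebraMap_exp_comm,
      Algebra.algebraMap_eq_smul_one, Real.exp_eq_exp_ℝ]
  rw [h2, smul_mul_assoc, one_mul]

lemma norm_exp_opA_le (lam : ℝ) (hlam : lam ≤ -1) {t : ℝ} (ht : 0 ≤ t) :
    ‖NormedSpace.exp (t • opA lam)‖ ≤ 1 := by
  rw [exp_opA_eq]
  rw [show ‖Real.exp (t * lam) • NormedSpace.exp (t • shiftE)‖
      = ‖Real.exp (t * lam)‖ * ‖NormedSpace.exp (t • shiftE)‖ from norm_smul (β := ell2 →L[ℝ] ell2) _ _,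
    Real.norm_eq_abs, abs_of_pos (Real.exp_pos _)]
  have h1 : ‖NormedSpace.exp (t • shiftE)‖ ≤ Real.exp t := by
    refine (my_norm_exp_le _).trans ?_
    apply Real.exp_le_exp.2
    have e1 : ‖t • shiftE‖ = |t| * ‖shiftE‖ := by
      rw [show ‖t • shiftE‖ = ‖t‖ * ‖shiftE‖ from
        norm_smul (β := ell2 →L[ℝ] ell2) _ _, Real.norm_eq_abs]
    have e2 : |t| * ‖shiftE‖ ≤ |t| * 1 :=
      mul_le_mul_of_nonneg_left norm_shiftE_le (abs_nonneg t)
    rw [e1]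
    calc |t| * ‖shiftE‖ ≤ |t| * 1 := e2
      _ = t := by rw [mul_one, abs_of_nonneg ht]
  calc Real.exp (t * lam) * ‖NormedSpace.exp (t • shiftE)‖
      ≤ Real.exp (t * lam) * Real.exp t :=
        mul_le_mul_of_nonneg_left h1 (Real.exp_pos _).le
    _ = Real.exp (t * lam + t) := (Real.exp_add _ _).symm
    _ ≤ Real.exp 0 := Real.exp_le_exp.2 (by nlinarith)
    _ = 1 := Real.exp_zero

lemma exp_opA_continuous (lam : ℝ) (y0 : ell2) :
    Continuous fun s : ℝ => NormedSpace.exp (s • opA lam) y0 := by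
  have h1 : Continuous fun s : ℝ => NormedSpace.exp (s • opA lam) :=
    NormedSpace.exp_continuous.comp (continuous_id.smul continuous_const)
  exact (ContinuousLinearMap.apply ℝ ell2 y0).continuous.comp h1

/-- Global null-controllability for `λ ≤ -1`: for every `ρ > 0` and every `y₀ ∈ ℓ²` the
system `ẏ = Ay + f` can be steered to `0` in some time `T > 0` by an admissible control
`f ∈ L²([0,T], ℓ²)` with `∫₀^T ‖f‖₂² dt ≤ ρ²`. -/
theorem stmt17 (lam ρ : ℝ) (hlam : lam ≤ -1) (hρ : 0 < ρ) (y0 : ell2) :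
    ∃ (T : ℝ) (f : ℝ → ell2), 0 < T ∧
      MemLp f 2 (volume.restrict (Set.Icc (0:ℝ) T)) ∧
      (∫ t in (0:ℝ)..T, ‖f t‖ ^ 2) ≤ ρ ^ 2 ∧
      NormedSpace.exp (T • opA lam) y0 +
        NormedSpace.exp (T • opA lam)
          (∫ s in (0:ℝ)..T, NormedSpace.exp ((-s) • opA lam) (f s)) = 0 := by
  set T : ℝ := ‖y0‖ ^ 2 / ρ ^ 2 + 1 with hT
  have hTpos : 0 < T := by positivity
  set f : ℝ → ell2 := fun s => (-(T⁻¹)) • NormedSpace.exp (s • opA lam) y0 with hf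
  have hfcont : Continuous f := (exp_opA_continuous lam y0).const_smul (-(T⁻¹))
  have hfnorm : ∀ t ∈ Set.Icc (0:ℝ) T, ‖f t‖ ≤ T⁻¹ * ‖y0‖ := by
    intro t ht
    rw [hf]
    simp only [norm_smul, norm_neg, norm_inv, Real.norm_eq_abs,
      abs_of_pos hTpos]
    gcongr
    calc ‖NormedSpace.exp (t • opA lam) y0‖
        ≤ ‖NormedSpace.exp (t • opA lam)‖ * ‖y0‖ := ContinuousLinearMap.le_opNorm _ _
      _ ≤ 1 * ‖y0‖ := by gcongr; exact norm_exp_opA_le lam hlam ht.1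
      _ = ‖y0‖ := one_mul _
  refine ⟨T, f, hTpos, ?_, ?_, ?_⟩
  · -- Memℒp
    haveI : IsFiniteMeasure (volume.restrict (Set.Icc (0:ℝ) T)) :=
      ⟨by rw [Measure.restrict_apply_univ]; exact measure_Icc_lt_top⟩
    refine MemLp.of_bound hfcont.aestronglyMeasurable (T⁻¹ * ‖y0‖) ?_
    exact (ae_restrict_iff' measurableSet_Icc).2 (ae_of_all _ hfnorm)
  · -- integral bound
    have hInt1 : IntervalIntegrable (fun t => ‖f t‖ ^ 2) volume 0 T :=
      ((hfcont.norm.pow 2)).intervalIntegrable _ _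
    have hmono : (∫ t in (0:ℝ)..T, ‖f t‖ ^ 2)
        ≤ ∫ _ in (0:ℝ)..T, (T⁻¹ * ‖y0‖) ^ 2 := by
      refine intervalIntegral.integral_mono_on hTpos.le hInt1
        intervalIntegrable_const ?_
      intro t ht
      have := hfnorm t ht
      nlinarith [norm_nonneg (f t)]
    rw [intervalIntegral.integral_const, smul_eq_mul, sub_zero] at hmono
    refine hmono.trans ?_
    have hρ2 : (0:ℝ) < ρ ^ 2 := by positivity
    rw [mul_pow, ← mul_assoc]
    have hTval : ρ ^ 2 * T = ‖y0‖ ^ 2 + ρ ^ 2 := by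
      rw [hT]; field_simp
    have h1 : T * (T⁻¹) ^ 2 = T⁻¹ := by
      field_simp
    rw [h1]
    rw [inv_mul_le_iff₀ hTpos]
    nlinarith [hTval]
  · -- endpoint
    have hkey : ∀ s : ℝ, NormedSpace.exp ((-s) • opA lam) (f s) = (-(T⁻¹)) • y0 := by
      intro s
      rw [hf]
      simp only [_root_.map_smul]
      congr 1
      have : NormedSpace.exp ((-s) • opA lam) (NormedSpace.exp (s • opA lam) y0)
          = (NormedSpace.exp ((-s) • opA lam) * NormedSpace.exp (s • opA lam)) y0 := rfl
      rw [this, ← NormedSpace.exp_add_of_commute]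
      · rw [neg_smul, neg_add_cancel, NormedSpace.exp_zero]; rfl
      · exact (Commute.refl (opA lam)).smul_left _ |>.smul_right _
    have hintegral : (∫ s in (0:ℝ)..T, NormedSpace.exp ((-s) • opA lam) (f s)) = -y0 := by
      simp only [hkey]
      rw [intervalIntegral.integral_const, sub_zero, smul_smul]
      rw [mul_neg, mul_inv_cancel₀ hTpos.ne', neg_one_smul]
    rw [hintegral, map_neg, add_neg_cancel]


end
end
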